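/- Let F be a field, let r, s ∈ F with s ≠ 0 and s ≠ 1, set c = s(r−1) and b = c·r, and let W be the Tate normal form E(b,c): y² + (1−c)xy − by = x³ − bx² with nonzero discriminant Δ. If the point P = (0,0) satisfies 11•P = O (so that P has exact order 11), then F₁₁(r,s) := rs³ − 3rs² − r² + 4rs − s = 0. (This is the raw form of the modular curve X₁(11).) -/

import Mathlib

open WeierstrassCurve.Affine WeierstrassCurve.Affine.Point

private lemma ns_congr {F : Type*} [Field F] {W : WeierstrassCurve.Affine F} {x y x' y' : F}
    (h : W.Nonsingular x y) (hx : x = x') (hy : y = y') : W.Nonsingular x' y' := hx ▸ hy ▸ h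

private lemma some_congr {F : Type*} [Field F] {W : WeierstrassCurve.Affine F} {x y x' y' : F}
    (h : W.Nonsingular x y) (hx : x = x') (hy : y = y') :
    Point.some _ _ h = Point.some _ _ (ns_congr h hx hy) := by subst hx; subst hy; rfl

open Classical in
/-- For a field `F`, `r, s ∈ F` with `s ≠ 0` and `s ≠ 1`, set `c = s(r-1)` and
`b = c * r`, and let `W` be the Tate normal form `E(b,c) : y² + (1-c)xy - by = x³ - bx²` with
nonzero discriminant. If the point `P = (0,0)` satisfies `11 • P = O`, then
`F₁₁(r,s) = rs³ - 3rs² - r² + 4rs - s = 0` (the raw form of `X₁(11)`). -/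
theorem raw_form_X1_11 (F : Type*) [Field F] (r s : F)
    (hs0 : s ≠ 0) (hs1 : s ≠ 1)
    (c : F) (hc : c = s * (r - 1)) (b : F) (hb : b = c * r)
    (W : WeierstrassCurve.Affine F)
    (hW : W = { a₁ := 1 - c, a₂ := -b, a₃ := -b, a₄ := 0, a₆ := 0 })
    (hΔ : W.Δ ≠ 0)
    (h : W.Nonsingular 0 0)
    (h11 : (11 : ℤ) • (WeierstrassCurve.Affine.Point.some 0 0 h) = 0) :
    r * s ^ 3 - 3 * r * s ^ 2 - r ^ 2 + 4 * r * s - s = 0 := by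
  subst hb; subst hc; subst hW
  have hs1' : s - 1 ≠ 0 := sub_ne_zero.mpr hs1
  let W : WeierstrassCurve.Affine F :=
    { a₁ := 1 - s * (r - 1), a₂ := -(s * (r - 1) * r), a₃ := -(s * (r - 1) * r), a₄ := 0, a₆ := 0 }
  have hWdef : W = { a₁ := 1 - s * (r - 1), a₂ := -(s * (r - 1) * r), a₃ := -(s * (r - 1) * r), a₄ := 0, a₆ := 0 } := rfl
  change W.Nonsingular 0 0 at h
  have hb0 : s * (r - 1) * r ≠ 0 := by
    intro hx
    rcases (W.nonsingular_iff 0 0).mp h with ⟨-, h' | h'⟩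
    · simp only [hWdef] at h'; simp at h'
    · simp only [hWdef] at h'; apply h'; linear_combination -hx
  have hr0 : r ≠ 0 := fun hx => hb0 (by rw [hx]; ring)
  have hr1 : r - 1 ≠ 0 := fun hx => hb0 (by rw [hx]; ring)
  -- 2P
  have hy0 : (0 : F) ≠ W.negY 0 0 := by
    simp only [negY]; intro hx; exact hb0 (by linear_combination -hx)
  have hl2 : W.slope 0 0 0 0 = 0 := by
    rw [slope_of_Y_ne rfl hy0]; simp [hWdef]
  have hx2e : W.addX 0 0 (W.slope 0 0 0 0) = s * r * (r - 1) := by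
    rw [hl2]; simp only [addX, hWdef]; ring
  have hy2e : W.addY 0 0 0 (W.slope 0 0 0 0) = s ^ 2 * r * (r - 1) ^ 2 := by
    rw [hl2]; simp only [addY, negAddY, addX, negY, hWdef]; ring
  have h2 : W.Nonsingular (s * r * (r - 1)) (s ^ 2 * r * (r - 1) ^ 2) :=
    ns_congr (nonsingular_add h h fun hxy => hy0 hxy.right) hx2e hy2e
  have e2 : (2 : ℤ) • Point.some _ _ h = Point.some _ _ h2 := by
    rw [show (2 : ℤ) = 1 + 1 by norm_num, add_smul, one_smul]
    exact (add_of_Y_ne hy0).trans (some_congr _ hx2e hy2e)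
  -- 3P = 2P + P
  have hx2 : (s * r * (r - 1)) ≠ 0 := by intro hx; exact hb0 (by linear_combination hx)
  have hl3 : W.slope (s * r * (r - 1)) 0 (s ^ 2 * r * (r - 1) ^ 2) 0 = s * (r - 1) := by
    rw [slope_of_X_ne hx2, sub_zero, sub_zero, div_eq_iff hx2]; ring
  have hx3e : W.addX (s * r * (r - 1)) 0 (W.slope (s * r * (r - 1)) 0 (s ^ 2 * r * (r - 1) ^ 2) 0) = s * (r - 1) := by
    rw [hl3]; simp only [addX, hWdef]; ring
  have hy3e : W.addY (s * r * (r - 1)) 0 (s ^ 2 * r * (r - 1) ^ 2) (W.slope (s * r * (r - 1)) 0 (s ^ 2 * r * (r - 1) ^ 2) 0) = s * (r - 1) ^ 2 := by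
    rw [hl3]; simp only [addY, negAddY, addX, negY, hWdef]; ring
  have h3 : W.Nonsingular (s * (r - 1)) (s * (r - 1) ^ 2) :=
    ns_congr (nonsingular_add h2 h fun hx => absurd hx.left hx2) hx3e hy3e
  have e3 : (3 : ℤ) • Point.some _ _ h = Point.some _ _ h3 := by
    rw [show (3 : ℤ) = 2 + 1 by norm_num, add_smul, one_smul, e2]
    exact (add_of_X_ne hx2).trans (some_congr _ hx3e hy3e)
  -- 4P = 3P + P
  have hx3 : (s * (r - 1)) ≠ 0 := by exact mul_ne_zero hs0 hr1
  have hl4 : W.slope (s * (r - 1)) 0 (s * (r - 1) ^ 2) 0 = r - 1 := by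
    rw [slope_of_X_ne hx3, sub_zero, sub_zero, div_eq_iff hx3]; ring
  have hx4e : W.addX (s * (r - 1)) 0 (W.slope (s * (r - 1)) 0 (s * (r - 1) ^ 2) 0) = r * (r - 1) := by
    rw [hl4]; simp only [addX, hWdef]; ring
  have hy4e : W.addY (s * (r - 1)) 0 (s * (r - 1) ^ 2) (W.slope (s * (r - 1)) 0 (s * (r - 1) ^ 2) 0) = r ^ 2 * (r - 1) * (s - 1) := by
    rw [hl4]; simp only [addY, negAddY, addX, negY, hWdef]; ring
  have h4 : W.Nonsingular (r * (r - 1)) (r ^ 2 * (r - 1) * (s - 1)) :=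
    ns_congr (nonsingular_add h3 h fun hx => absurd hx.left hx3) hx4e hy4e
  have e4 : (4 : ℤ) • Point.some _ _ h = Point.some _ _ h4 := by
    rw [show (4 : ℤ) = 3 + 1 by norm_num, add_smul, one_smul, e3]
    exact (add_of_X_ne hx3).trans (some_congr _ hx4e hy4e)
  -- 5P = 4P + P
  have hx4 : (r * (r - 1)) ≠ 0 := by exact mul_ne_zero hr0 hr1
  have hl5 : W.slope (r * (r - 1)) 0 (r ^ 2 * (r - 1) * (s - 1)) 0 = r * (s - 1) := by
    rw [slope_of_X_ne hx4, sub_zero, sub_zero, div_eq_iff hx4]; ring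
  have hx5e : W.addX (r * (r - 1)) 0 (W.slope (r * (r - 1)) 0 (r ^ 2 * (r - 1) * (s - 1)) 0) = r * s * (s - 1) := by
    rw [hl5]; simp only [addX, hWdef]; ring
  have hy5e : W.addY (r * (r - 1)) 0 (r ^ 2 * (r - 1) * (s - 1)) (W.slope (r * (r - 1)) 0 (r ^ 2 * (r - 1) * (s - 1)) 0) = r * s ^ 2 * (r - s) := by
    rw [hl5]; simp only [addY, negAddY, addX, negY, hWdef]; ring
  have h5 : W.Nonsingular (r * s * (s - 1)) (r * s ^ 2 * (r - s)) :=
    ns_congr (nonsingular_add h4 h fun hx => absurd hx.left hx4) hx5e hy5e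
  have e5 : (5 : ℤ) • Point.some _ _ h = Point.some _ _ h5 := by
    rw [show (5 : ℤ) = 4 + 1 by norm_num, add_smul, one_smul, e4]
    exact (add_of_X_ne hx4).trans (some_congr _ hx5e hy5e)
  -- 6P = 5P + P
  have hx5 : (r * s * (s - 1)) ≠ 0 := by exact mul_ne_zero (mul_ne_zero hr0 hs0) hs1'
  have hl6 : W.slope (r * s * (s - 1)) 0 (r * s ^ 2 * (r - s)) 0 = s * (r - s) / (s - 1) := by
    rw [slope_of_X_ne hx5, sub_zero, sub_zero, div_eq_iff hx5]; (field_simp [hs1'])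
  have hx6e : W.addX (r * s * (s - 1)) 0 (W.slope (r * s * (s - 1)) 0 (r * s ^ 2 * (r - s)) 0) = s * (r - 1) * (r - s) / (s - 1) ^ 2 := by
    rw [hl6]; simp only [addX, hWdef]; (field_simp [hs1']; ring)
  have hy6e : W.addY (r * s * (s - 1)) 0 (r * s ^ 2 * (r - s)) (W.slope (r * s * (s - 1)) 0 (r * s ^ 2 * (r - s)) 0) = s ^ 2 * (r - 1) ^ 2 * (r * s - 2 * r + 1) / (s - 1) ^ 3 := by
    rw [hl6]; simp only [addY, negAddY, addX, negY, hWdef]; (field_simp [hs1']; ring)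
  have h6 : W.Nonsingular (s * (r - 1) * (r - s) / (s - 1) ^ 2) (s ^ 2 * (r - 1) ^ 2 * (r * s - 2 * r + 1) / (s - 1) ^ 3) :=
    ns_congr (nonsingular_add h5 h fun hx => absurd hx.left hx5) hx6e hy6e
  have e6 : (6 : ℤ) • Point.some _ _ h = Point.some _ _ h6 := by
    rw [show (6 : ℤ) = 5 + 1 by norm_num, add_smul, one_smul, e5]
    exact (add_of_X_ne hx5).trans (some_congr _ hx6e hy6e)
  -- 11P = 5P + 6P = 0 forces x(5P) = x(6P)
  rw [show (11 : ℤ) = 5 + 6 by norm_num, add_smul, e5, e6] at h11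
  by_contra hF
  have hx56 : r * s * (s - 1) ≠ s * (r - 1) * (r - s) / (s - 1) ^ 2 := by
    intro hx
    rw [eq_div_iff (pow_ne_zero 2 hs1')] at hx
    apply hF
    have h' : s * (r * s ^ 3 - 3 * r * s ^ 2 - r ^ 2 + 4 * r * s - s) = 0 := by
      linear_combination hx
    exact (mul_eq_zero.mp h').resolve_left hs0
  rw [add_of_X_ne hx56] at h11
  exact some_ne_zero _ h11
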